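/- For every 2-element set R ⊆ V and 2 ≤ k ≤ n, Σ_{|S|=k, R∩S=∅} x_S = (1/C(k,2)) ( Σ_{Q∈Ω²} y^k_Q − (k/2) Σ_{Q∈Ω², |R∩Q|=1} y^k_Q + (k(k−3)/2) y^k_R ), where y^k_Q = Σ_{|S|=k, Q⊆S} x_S. -/
import Mathlib

open Finset

lemma swap_sum (n k : ℕ) (x : Finset (Fin n) → ℝ) (P : Finset (Fin n) → Prop)
    [DecidablePred P] :
    (∑ Q ∈ Finset.univ.filter P,
        ∑ S ∈ Finset.univ.filter (fun S : Finset (Fin n) => S.card = k ∧ Q ⊆ S), x S)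
      = ∑ S ∈ Finset.univ.filter (fun S : Finset (Fin n) => S.card = k),
          ((Finset.univ.filter fun Q => P Q ∧ Q ⊆ S).card : ℝ) * x S := by
  rw [Finset.sum_comm' (t' := Finset.univ.filter (fun S : Finset (Fin n) => S.card = k))
      (s' := fun S => Finset.univ.filter fun Q => P Q ∧ Q ⊆ S)]
  · apply Finset.sum_congr rfl
    intro S _
    rw [Finset.sum_const, nsmul_eq_mul]
  · intro Q S
    simp only [Finset.mem_filter, Finset.mem_univ, true_and]
    tauto

lemma count_all (n k : ℕ) (S : Finset (Fin n)) (hS : S.card = k) :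
    (Finset.univ.filter fun Q : Finset (Fin n) => Q.card = 2 ∧ Q ⊆ S).card = k.choose 2 := by
  have : (Finset.univ.filter fun Q : Finset (Fin n) => Q.card = 2 ∧ Q ⊆ S)
      = S.powersetCard 2 := by
    ext Q; simp [Finset.mem_powersetCard, and_comm]
  rw [this, Finset.card_powersetCard, hS]

lemma count_one (n : ℕ) (R S : Finset (Fin n)) :
    (Finset.univ.filter fun Q : Finset (Fin n) => (Q.card = 2 ∧ (R ∩ Q).card = 1) ∧ Q ⊆ S).card
      = (R ∩ S).card * (S \ R).card := by
  rw [← Finset.card_product]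
  symm
  apply Finset.card_bij (fun p _ => ({p.1, p.2} : Finset (Fin n)))
  · rintro ⟨a, b⟩ hp
    simp only [Finset.mem_product, Finset.mem_inter, Finset.mem_sdiff] at hp
    obtain ⟨⟨haR, haS⟩, hbS, hbR⟩ := hp
    have hab : a ≠ b := fun h => hbR (h ▸ haR)
    simp only [Finset.mem_filter, Finset.mem_univ, true_and]
    refine ⟨⟨Finset.card_pair hab, ?_⟩, ?_⟩
    · have : R ∩ ({a, b} : Finset (Fin n)) = {a} := by
        ext z
        simp only [Finset.mem_inter, Finset.mem_insert, Finset.mem_singleton]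
        constructor
        · rintro ⟨hz, rfl | rfl⟩
          · rfl
          · exact absurd hz hbR
        · rintro rfl; exact ⟨haR, Or.inl rfl⟩
      rw [this, Finset.card_singleton]
    · intro z hz
      simp only [Finset.mem_insert, Finset.mem_singleton] at hz
      rcases hz with rfl | rfl
      · exact haS
      · exact hbS
  · rintro ⟨a, b⟩ hp ⟨a', b'⟩ hp' h
    simp only [Finset.mem_product, Finset.mem_inter, Finset.mem_sdiff] at hp hp'
    obtain ⟨⟨haR, haS⟩, hbS, hbR⟩ := hp
    obtain ⟨⟨haR', haS'⟩, hbS', hbR'⟩ := hp'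
    have ha' : a' ∈ ({a, b} : Finset (Fin n)) := h ▸ (by simp)
    have hb' : b' ∈ ({a, b} : Finset (Fin n)) := h ▸ (by simp)
    simp only [Finset.mem_insert, Finset.mem_singleton] at ha' hb'
    have e1 : a' = a := by
      rcases ha' with h1 | h1
      · exact h1
      · exact absurd (h1 ▸ haR') hbR
    have e2 : b' = b := by
      rcases hb' with h1 | h1
      · exact absurd (h1 ▸ haR) hbR'
      · exact h1
    simp [e1, e2]
  · intro Q hQ
    simp only [Finset.mem_filter, Finset.mem_univ, true_and] at hQ
    obtain ⟨⟨hQ2, hQ1⟩, hQS⟩ := hQ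
    obtain ⟨a, ha⟩ := Finset.card_eq_one.mp hQ1
    have haQ : a ∈ Q := by
      have : a ∈ R ∩ Q := ha ▸ Finset.mem_singleton_self a
      exact (Finset.mem_inter.mp this).2
    have haR : a ∈ R := by
      have : a ∈ R ∩ Q := ha ▸ Finset.mem_singleton_self a
      exact (Finset.mem_inter.mp this).1
    obtain ⟨u, v, huv, hQe⟩ := Finset.card_eq_two.mp hQ2
    have haQ' : a = u ∨ a = v := by
      rw [hQe] at haQ; simpa using haQ
    -- b is the other element
    have main : ∀ b, b ∈ Q → b ≠ a → ∃ p ∈ (R ∩ S) ×ˢ (S \ R), ({p.1, p.2} : Finset (Fin n)) = Q := by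
      intro b hbQ hba
      have hbR : b ∉ R := by
        intro hbR
        have : b ∈ R ∩ Q := Finset.mem_inter.mpr ⟨hbR, hbQ⟩
        rw [ha, Finset.mem_singleton] at this
        exact hba this
      refine ⟨(a, b), ?_, ?_⟩
      · simp only [Finset.mem_product, Finset.mem_inter, Finset.mem_sdiff]
        exact ⟨⟨haR, hQS haQ⟩, hQS hbQ, hbR⟩
      · rw [hQe]
        have hbQ' := hQe ▸ hbQ
        simp only [Finset.mem_insert, Finset.mem_singleton] at hbQ'
        rcases haQ' with h1 | h1
        · have hbv : b = v := by
            rcases hbQ' with h2 | h2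
            · exact absurd (h2.trans h1.symm) hba
            · exact h2
          rw [h1, hbv]
        · have hbu : b = u := by
            rcases hbQ' with h2 | h2
            · exact h2
            · exact absurd (h2.trans h1.symm) hba
          rw [h1, hbu, Finset.pair_comm]
    rcases haQ' with h1 | h1
    · obtain ⟨p, hp1, hp2⟩ := main v (hQe ▸ (by simp)) (fun h => huv (h.trans h1).symm)
      exact ⟨p, hp1, hp2⟩
    · obtain ⟨p, hp1, hp2⟩ := main u (hQe ▸ (by simp)) (fun h => huv (h.trans h1))
      exact ⟨p, hp1, hp2⟩

/-- y^k_Q = Σ_{S ⊆ V, |S|=k, Q⊆S} x_S -/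
def yQ (n k : ℕ) (Q : Finset (Fin n)) (x : Finset (Fin n) → ℝ) : ℝ :=
  ∑ S ∈ Finset.univ.filter (fun S : Finset (Fin n) => S.card = k ∧ Q ⊆ S), x S

theorem disjoint_from_pair_identity (n : ℕ) (x : Finset (Fin n) → ℝ)
    (R : Finset (Fin n)) (hR : R.card = 2) (k : ℕ) (hk : 2 ≤ k) (hkn : k ≤ n) :
    (∑ S ∈ Finset.univ.filter
        (fun S : Finset (Fin n) => S.card = k ∧ R ∩ S = ∅), x S)
      = (1 / ((k : ℝ) * ((k : ℝ) - 1) / 2)) *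
          ((∑ Q ∈ Finset.univ.filter
              (fun Q : Finset (Fin n) => Q.card = 2), yQ n k Q x)
            - ((k : ℝ) / 2) *
              (∑ Q ∈ Finset.univ.filter
                (fun Q : Finset (Fin n) => Q.card = 2 ∧ (R ∩ Q).card = 1),
                yQ n k Q x)
            + ((k : ℝ) * ((k : ℝ) - 3) / 2) * yQ n k R x) := by
  classical
  have hL : (∑ S ∈ Finset.univ.filter
        (fun S : Finset (Fin n) => S.card = k ∧ R ∩ S = ∅), x S)
      = ∑ S ∈ Finset.univ.filter (fun S : Finset (Fin n) => S.card = k),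
          if R ∩ S = ∅ then x S else 0 := by
    rw [← Finset.filter_filter, Finset.sum_filter]
  have hy : yQ n k R x
      = ∑ S ∈ Finset.univ.filter (fun S : Finset (Fin n) => S.card = k),
          if R ⊆ S then x S else 0 := by
    unfold yQ
    rw [← Finset.filter_filter, Finset.sum_filter]
  have h1 : (∑ Q ∈ Finset.univ.filter
        (fun Q : Finset (Fin n) => Q.card = 2), yQ n k Q x)
      = ∑ S ∈ Finset.univ.filter (fun S : Finset (Fin n) => S.card = k),
          ((k.choose 2 : ℕ) : ℝ) * x S := by
    unfold yQ
    rw [swap_sum]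
    apply Finset.sum_congr rfl
    intro S hS
    rw [count_all n k S (Finset.mem_filter.mp hS).2]
  have h2 : (∑ Q ∈ Finset.univ.filter
        (fun Q : Finset (Fin n) => Q.card = 2 ∧ (R ∩ Q).card = 1), yQ n k Q x)
      = ∑ S ∈ Finset.univ.filter (fun S : Finset (Fin n) => S.card = k),
          (((R ∩ S).card * (S \ R).card : ℕ) : ℝ) * x S := by
    unfold yQ
    rw [swap_sum]
    apply Finset.sum_congr rfl
    intro S _
    rw [count_one n R S]
  rw [hL, h1, h2, hy, Finset.mul_sum, Finset.mul_sum, ← Finset.sum_sub_distrib,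
      ← Finset.sum_add_distrib, Finset.mul_sum]
  apply Finset.sum_congr rfl
  intro S hS
  have hSk : S.card = k := (Finset.mem_filter.mp hS).2
  have htk : (R ∩ S).card ≤ k := hSk ▸ Finset.card_le_card Finset.inter_subset_right
  have ht2 : (R ∩ S).card ≤ 2 := hR ▸ Finset.card_le_card Finset.inter_subset_left
  have hsd : (S \ R).card = k - (R ∩ S).card := by
    have h := Finset.card_sdiff_add_card_inter S R
    rw [Finset.inter_comm] at h
    omega
  have hRsub : R ⊆ S ↔ (R ∩ S).card = 2 := by
    constructor
    · intro h
      rw [Finset.inter_eq_left.mpr h, hR]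
    · intro h
      have : R ∩ S = R :=
        Finset.eq_of_subset_of_card_le Finset.inter_subset_left (by rw [h, hR])
      exact this ▸ Finset.inter_subset_right
  have hemp : R ∩ S = ∅ ↔ (R ∩ S).card = 0 := Finset.card_eq_zero.symm
  have hk' : (2 : ℝ) ≤ (k : ℝ) := by exact_mod_cast hk
  have hC : (k : ℝ) * ((k : ℝ) - 1) / 2 ≠ 0 := by nlinarith
  rw [Nat.cast_choose_two, hsd]
  push_cast [Nat.cast_sub htk]
  set t := (R ∩ S).card with htdef
  clear_value t
  have hk0 : (k : ℝ) ≠ 0 := by nlinarith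
  have hk1 : (k : ℝ) - 1 ≠ 0 := by nlinarith
  interval_cases t
  · rw [if_pos (hemp.mpr rfl), if_neg (fun h => by simpa using hRsub.mp h)]
    field_simp
    ring
  · rw [if_neg (fun h => by simpa using hemp.mp h), if_neg (fun h => by simpa using hRsub.mp h)]
    field_simp
    ring
  · rw [if_neg (fun h => by simpa using hemp.mp h), if_pos (hRsub.mpr rfl)]
    field_simp
    ring
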